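/- (Concrete form of the volatility validation theorem.) Let F > 0 and let v̂ : (0,∞) × ℝ → (0,∞) be continuous and satisfy: (i) for each k ∈ ℝ, τ ↦ v̂(τ,k)·√τ is nondecreasing on (0,∞); (ii) for each τ > 0, the slice k ↦ v̂(τ,k) is twice continuously differentiable with But(τ, k, v̂(τ,k), ∂_k v̂(τ,k), ∂²_k v̂(τ,k)) ≥ 0 for all k ∈ ℝ, and limsup_{k → ∞} v̂(τ,k)²/k < 2/τ. Define the call price surface C(τ,K) = F · BS(τ, log(K/F), v̂(τ, log(K/F))) for τ > 0, K > 0. Then: (a) for each K > 0, τ ↦ C(τ,K) is nondecreasing; (b) for each τ > 0, K ↦ C(τ,K) is convex and nonincreasing on (0,∞); (c) max(F − K, 0) ≤ C(τ,K) ≤ F for all τ, K; (d) for each τ > 0, C(τ,K) → 0 as K → ∞. -/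

import Mathlib

open Real Filter Set

/-- Standard normal probability density function. -/
noncomputable def stdGaussPDF (x : ℝ) : ℝ :=
  (Real.sqrt (2 * Real.pi))⁻¹ * Real.exp (-(x ^ 2) / 2)

/-- Standard normal cumulative distribution function. -/
noncomputable def stdGaussCDF (x : ℝ) : ℝ :=
  ∫ t in Set.Iic x, stdGaussPDF t

/-- d1 term of the Black–Scholes formula. -/
noncomputable def d1 (τ k v : ℝ) : ℝ :=
  -k / (v * Real.sqrt τ) + v * Real.sqrt τ / 2

/-- d2 term of the Black–Scholes formula. -/
noncomputable def d2 (τ k v : ℝ) : ℝ :=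
  -k / (v * Real.sqrt τ) - v * Real.sqrt τ / 2

/-- Black–Scholes call price in units of the forward. -/
noncomputable def BS (τ k v : ℝ) : ℝ :=
  stdGaussCDF (d1 τ k v) - Real.exp k * stdGaussCDF (d2 τ k v)

/-- The butterfly functional. -/
noncomputable def But (τ k v₀ v₁ v₂ : ℝ) : ℝ :=
  (1 + d1 τ k v₀ * v₁ * Real.sqrt τ) * (1 + d2 τ k v₀ * v₁ * Real.sqrt τ) + v₀ * v₂ * τ

open MeasureTheory

lemma pdf_pos (x : ℝ) : 0 < stdGaussPDF x := by
  unfold stdGaussPDF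
  positivity

lemma pdf_eq (x : ℝ) : stdGaussPDF x = (Real.sqrt (2 * Real.pi))⁻¹ * Real.exp (-(1/2) * x ^ 2) := by
  unfold stdGaussPDF; ring_nf

lemma pdf_le (x : ℝ) : stdGaussPDF x ≤ (Real.sqrt (2 * Real.pi))⁻¹ := by
  unfold stdGaussPDF
  have h1 : Real.exp (-(x ^ 2) / 2) ≤ 1 := by
    rw [Real.exp_le_one_iff]; nlinarith [sq_nonneg x]
  have h2 : (0:ℝ) < (Real.sqrt (2 * Real.pi))⁻¹ := by positivity
  nlinarith

lemma pdf_integrable : Integrable stdGaussPDF := by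
  have : Integrable (fun x : ℝ => Real.exp (-(1/2) * x ^ 2)) := integrable_exp_neg_mul_sq (by norm_num)
  have h := this.const_mul (Real.sqrt (2 * Real.pi))⁻¹
  refine h.congr (by filter_upwards with x; rw [pdf_eq])

lemma pdf_continuous : Continuous stdGaussPDF := by
  unfold stdGaussPDF
  continuity

lemma pdf_integral_total : ∫ t, stdGaussPDF t = 1 := by
  have : ∫ t : ℝ, Real.exp (-(1/2) * t ^ 2) = Real.sqrt (π / (1/2)) := integral_gaussian _
  have h2 : ∫ t, stdGaussPDF t = (Real.sqrt (2 * Real.pi))⁻¹ * Real.sqrt (π / (1/2)) := by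
    rw [← this, ← integral_const_mul]
    congr 1; ext t; rw [pdf_eq]
  rw [h2]
  have : π / (1/2) = 2 * π := by ring
  rw [this, inv_mul_cancel₀]
  positivity

lemma cdf_mono : Monotone stdGaussCDF := by
  intro a b hab
  apply setIntegral_mono_set pdf_integrable.integrableOn
  · filter_upwards with x using (pdf_pos x).le
  · exact HasSubset.Subset.eventuallyLE (Iic_subset_Iic.mpr hab)

lemma cdf_nonneg (x : ℝ) : 0 ≤ stdGaussCDF x :=
  setIntegral_nonneg measurableSet_Iic (fun t _ => (pdf_pos t).le)

lemma cdf_lt_one (x : ℝ) : stdGaussCDF x < 1 := by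
  have h : stdGaussCDF x + ∫ t in Set.Ioi x, stdGaussPDF t = 1 := by
    rw [stdGaussCDF, ← pdf_integral_total]
    exact intervalIntegral.integral_Iic_add_Ioi pdf_integrable.integrableOn pdf_integrable.integrableOn
  have h2 : 0 < ∫ t in Set.Ioi x, stdGaussPDF t := by
    rw [setIntegral_pos_iff_support_of_nonneg_ae]
    · have : Function.support stdGaussPDF = Set.univ := by
        ext t; simp [Function.mem_support, (pdf_pos t).ne']
      rw [this]
      simpa using measure_Ioi_pos (volume : Measure ℝ) x
    · filter_upwards with t using (pdf_pos t).le
    · exact pdf_integrable.integrableOn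
  linarith

lemma cdf_tendsto_one : Tendsto stdGaussCDF atTop (nhds 1) := by
  have := MeasureTheory.tendsto_setIntegral_of_monotone (ι := ℝ) (s := fun x => Set.Iic x)
    (f := stdGaussPDF) (fun i => measurableSet_Iic) (fun a b hab => Iic_subset_Iic.mpr hab)
    (by rw [iUnion_Iic]; exact pdf_integrable.integrableOn)
  rwa [iUnion_Iic, MeasureTheory.setIntegral_univ, pdf_integral_total] at this

lemma cdf_symm (x : ℝ) : stdGaussCDF (-x) = 1 - stdGaussCDF x := by
  have h : stdGaussCDF x + ∫ t in Set.Ioi x, stdGaussPDF t = 1 := by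
    rw [stdGaussCDF, ← pdf_integral_total]
    exact intervalIntegral.integral_Iic_add_Ioi pdf_integrable.integrableOn pdf_integrable.integrableOn
  have h2 : ∫ t in Set.Ioi x, stdGaussPDF t = stdGaussCDF (-x) := by
    have := integral_comp_neg_Ioi x stdGaussPDF
    rw [stdGaussCDF, ← this]
    congr 1; ext t
    unfold stdGaussPDF; rw [neg_pow]; ring_nf
  linarith

lemma cdf_tendsto_zero : Tendsto stdGaussCDF atBot (nhds 0) := by
  have h : Tendsto (fun x => 1 - stdGaussCDF x) atTop (nhds 0) := by
    have := cdf_tendsto_one.const_sub 1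
    simpa using this
  have h2 : Tendsto (fun x : ℝ => stdGaussCDF (-x)) atTop (nhds 0) := by
    refine h.congr fun x => (cdf_symm x).symm
  have h3 := h2.comp tendsto_neg_atBot_atTop
  have : ∀ x : ℝ, stdGaussCDF x = ((fun x : ℝ => stdGaussCDF (-x)) ∘ Neg.neg) x := by
    intro x; simp [Function.comp]
  exact Tendsto.congr (fun x => (this x).symm) h3

lemma pdf_hasDeriv (x : ℝ) : HasDerivAt stdGaussPDF (-x * stdGaussPDF x) x := by
  unfold stdGaussPDF
  have h : HasDerivAt (fun t : ℝ => -(t ^ 2) / 2) (-x) x := by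
    have := ((hasDerivAt_pow 2 x).neg).div_const 2
    refine this.congr_deriv (Eq.symm ?_); push_cast; ring
  have h2 := (h.exp).const_mul (Real.sqrt (2 * Real.pi))⁻¹
  refine h2.congr_deriv (Eq.symm ?_); ring

lemma pdf_tendsto_atBot : Tendsto stdGaussPDF atBot (nhds 0) := by
  have h1 : Tendsto (fun x : ℝ => -(x ^ 2) / 2) atBot atBot := by
    apply Tendsto.atBot_div_const (by norm_num)
    apply tendsto_neg_atTop_atBot.comp
    have hsq : Tendsto (fun x : ℝ => (-x) * (-x)) atBot atTop :=
      tendsto_neg_atBot_atTop.atTop_mul_atTop₀ tendsto_neg_atBot_atTop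
    exact hsq.congr (fun x => by ring)
  have h2 := (Real.tendsto_exp_atBot).comp h1
  have h3 := h2.const_mul (Real.sqrt (2 * Real.pi))⁻¹
  have : ∀ x : ℝ, stdGaussPDF x = (Real.sqrt (2 * Real.pi))⁻¹ * ((Real.exp ∘ fun x : ℝ => -(x ^ 2) / 2) x) := by
    intro x; rfl
  rw [mul_zero] at h3
  exact Tendsto.congr (fun x => (this x).symm) h3

lemma id_mul_pdf_integrable : Integrable (fun t => t * stdGaussPDF t) := by
  have h := integrable_rpow_mul_exp_neg_mul_sq (b := 1/2) (by norm_num) (s := 1) (by norm_num)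
  have h2 := h.const_mul (Real.sqrt (2 * Real.pi))⁻¹
  refine h2.congr ?_
  filter_upwards with t
  rw [Real.rpow_one, pdf_eq]; ring

lemma cdf_hasDeriv (x : ℝ) : HasDerivAt stdGaussCDF (stdGaussPDF x) x := by
  have key : ∀ y : ℝ, stdGaussCDF y = stdGaussCDF 0 + ∫ t in (0:ℝ)..y, stdGaussPDF t := by
    intro y
    have := intervalIntegral.integral_Iic_sub_Iic (f := stdGaussPDF) (μ := volume)
      (a := (0:ℝ)) (b := y) pdf_integrable.integrableOn pdf_integrable.integrableOn
    unfold stdGaussCDF; linarith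
  have h : HasDerivAt (fun y => stdGaussCDF 0 + ∫ t in (0:ℝ)..y, stdGaussPDF t) (stdGaussPDF x) x := by
    apply HasDerivAt.const_add
    apply intervalIntegral.integral_hasDerivAt_right
    · exact pdf_integrable.intervalIntegrable
    · exact pdf_continuous.stronglyMeasurableAtFilter _ _
    · exact pdf_continuous.continuousAt
  exact h.congr_of_eventuallyEq (by filter_upwards with y; rw [key y])

lemma cdf_continuous : Continuous stdGaussCDF :=
  continuous_iff_continuousAt.mpr fun x => (cdf_hasDeriv x).continuousAt

/-- Mills-type bound. -/
lemma mills {x : ℝ} (hx : x < 0) : stdGaussCDF x ≤ stdGaussPDF x / (-x) := by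
  have hint : ∫ t in Set.Iic x, (-t) * stdGaussPDF t = stdGaussPDF x := by
    have := integral_Iic_of_hasDerivAt_of_tendsto' (f := stdGaussPDF)
      (f' := fun t => -t * stdGaussPDF t) (a := x) (m := 0)
      (fun t _ => pdf_hasDeriv t)
      ((id_mul_pdf_integrable.neg.congr (by filter_upwards with t; simp)).integrableOn)
      pdf_tendsto_atBot
    simpa using this
  have hmono : stdGaussCDF x ≤ ∫ t in Set.Iic x, (t / x) * stdGaussPDF t := by
    unfold stdGaussCDF
    apply setIntegral_mono_on
    · exact pdf_integrable.integrableOn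
    · exact ((id_mul_pdf_integrable.div_const x).congr (by filter_upwards with t; ring)).integrableOn
    · exact measurableSet_Iic
    · intro t ht
      have h1 : (1:ℝ) ≤ t / x := by
        rw [le_div_iff_of_neg hx]
        simpa using ht
      nlinarith [pdf_pos t]
  have heq : ∫ t in Set.Iic x, (t / x) * stdGaussPDF t = stdGaussPDF x / (-x) := by
    have : ∀ t : ℝ, (t / x) * stdGaussPDF t = (-x)⁻¹ * ((-t) * stdGaussPDF t) := by
      intro t
      have hx0 : x ≠ 0 := hx.ne
      field_simp
    simp_rw [this, integral_const_mul, hint]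
    field_simp
  linarith [hmono, heq.le]

noncomputable def D1 (k w : ℝ) : ℝ := -k / w + w / 2
noncomputable def D2 (k w : ℝ) : ℝ := -k / w - w / 2
noncomputable def BSw (k w : ℝ) : ℝ := stdGaussCDF (D1 k w) - Real.exp k * stdGaussCDF (D2 k w)

lemma pdf_identity {k w : ℝ} (hw : w ≠ 0) :
    Real.exp k * stdGaussPDF (D2 k w) = stdGaussPDF (D1 k w) := by
  unfold stdGaussPDF D1 D2
  rw [mul_comm (Real.exp k), mul_assoc, ← Real.exp_add]
  congr 2
  field_simp
  ring

lemma hasDerivAt_D1 (k : ℝ) {w : ℝ} (hw : w ≠ 0) :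
    HasDerivAt (fun w => D1 k w) (k / w ^ 2 + 1 / 2) w := by
  unfold D1
  have h1 : HasDerivAt (fun w : ℝ => -k / w) (k / w ^ 2) w := by
    have := (hasDerivAt_inv hw).const_mul (-k)
    refine this.congr_deriv (Eq.symm ?_)
    field_simp
  exact h1.add ((hasDerivAt_id w).div_const 2)

lemma hasDerivAt_D2 (k : ℝ) {w : ℝ} (hw : w ≠ 0) :
    HasDerivAt (fun w => D2 k w) (k / w ^ 2 - 1 / 2) w := by
  unfold D2
  have h1 : HasDerivAt (fun w : ℝ => -k / w) (k / w ^ 2) w := by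
    have := (hasDerivAt_inv hw).const_mul (-k)
    refine this.congr_deriv (Eq.symm ?_)
    field_simp
  exact h1.sub ((hasDerivAt_id w).div_const 2)

lemma hasDerivAt_BSw (k : ℝ) {w : ℝ} (hw : 0 < w) :
    HasDerivAt (fun w => BSw k w) (stdGaussPDF (D1 k w)) w := by
  have h1 := (cdf_hasDeriv (D1 k w)).comp w (hasDerivAt_D1 k hw.ne')
  have h2 := ((cdf_hasDeriv (D2 k w)).comp w (hasDerivAt_D2 k hw.ne')).const_mul (Real.exp k)
  have h3 := h1.sub h2
  refine h3.congr_deriv (Eq.symm ?_)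
  have hid := pdf_identity (k := k) hw.ne'
  rw [show Real.exp k * (stdGaussPDF (D2 k w) * (k / w ^ 2 - 1 / 2))
      = (Real.exp k * stdGaussPDF (D2 k w)) * (k / w ^ 2 - 1 / 2) by ring, hid]
  ring

lemma BSw_strictMono (k : ℝ) : StrictMonoOn (fun w => BSw k w) (Set.Ioi 0) := by
  apply strictMonoOn_of_deriv_pos (convex_Ioi 0)
  · intro w hw
    exact (hasDerivAt_BSw k hw).continuousAt.continuousWithinAt
  · intro w hw
    rw [interior_Ioi] at hw
    rw [(hasDerivAt_BSw k hw).deriv]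
    exact pdf_pos _

lemma BSw_le_one (k w : ℝ) : BSw k w ≤ 1 := by
  unfold BSw
  have h1 := cdf_lt_one (D1 k w)
  have h2 := cdf_nonneg (D2 k w)
  nlinarith [Real.exp_pos k]

lemma BSw_symm {k w : ℝ} (hw : w ≠ 0) :
    BSw k w = (1 - Real.exp k) + Real.exp k * BSw (-k) w := by
  unfold BSw
  have e1 : -(D1 k w) = D2 (-k) w := by unfold D1 D2; field_simp; ring
  have e2 : -(D2 k w) = D1 (-k) w := by unfold D1 D2; field_simp; ring
  have h1 : stdGaussCDF (D1 k w) = 1 - stdGaussCDF (D2 (-k) w) := by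
    rw [← e1, cdf_symm]; ring
  have h2 : stdGaussCDF (D2 k w) = 1 - stdGaussCDF (D1 (-k) w) := by
    rw [← e2, cdf_symm]; ring
  rw [h1, h2]
  have hek : Real.exp k * Real.exp (-k) = 1 := by rw [← Real.exp_add]; simp
  linear_combination (stdGaussCDF (D2 (-k) w)) * hek

lemma BSw_tendsto_zero {k : ℝ} (hk : 0 < k) :
    Tendsto (fun w => BSw k w) (nhdsWithin 0 (Set.Ioi 0)) (nhds 0) := by
  have hmk : Tendsto (fun w : ℝ => -k / w) (nhdsWithin 0 (Set.Ioi 0)) atBot := by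
    have hinv : Tendsto (fun w : ℝ => w⁻¹) (nhdsWithin 0 (Set.Ioi 0)) atTop :=
      tendsto_inv_nhdsGT_zero
    have := hinv.const_mul_atTop_of_neg (neg_neg_of_pos hk)
    exact this.congr (fun w => by rw [neg_mul, neg_div, div_eq_mul_inv])
  have hhalf : Tendsto (fun w : ℝ => w / 2) (nhdsWithin 0 (Set.Ioi 0)) (nhds 0) := by
    have : Tendsto (fun w : ℝ => w / 2) (nhds 0) (nhds 0) := by
      have := (continuous_id.div_const (2:ℝ)).tendsto 0
      simpa using this
    exact this.mono_left nhdsWithin_le_nhds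
  have hD1 : Tendsto (fun w => D1 k w) (nhdsWithin 0 (Set.Ioi 0)) atBot :=
    hmk.atBot_add hhalf
  have hhalf' : Tendsto (fun w : ℝ => -(w/2)) (nhdsWithin 0 (Set.Ioi 0)) (nhds 0) := by
    simpa using hhalf.neg
  have hD2 : Tendsto (fun w => D2 k w) (nhdsWithin 0 (Set.Ioi 0)) atBot :=
    hmk.atBot_add hhalf'
  have h1 : Tendsto (fun w => stdGaussCDF (D1 k w)) (nhdsWithin 0 (Set.Ioi 0)) (nhds 0) :=
    cdf_tendsto_zero.comp hD1
  have h2 : Tendsto (fun w => Real.exp k * stdGaussCDF (D2 k w)) (nhdsWithin 0 (Set.Ioi 0)) (nhds 0) := by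
    have := (cdf_tendsto_zero.comp hD2).const_mul (Real.exp k)
    simpa using this
  have := h1.sub h2
  simpa [BSw] using this

lemma BSw_nonneg_pos {k : ℝ} (hk : 0 < k) {w : ℝ} (hw : 0 < w) : 0 ≤ BSw k w := by
  refine le_of_tendsto (BSw_tendsto_zero hk) ?_
  filter_upwards [self_mem_nhdsWithin, Ioc_mem_nhdsGT hw] with u hu hu2
  exact (BSw_strictMono k).monotoneOn hu (by exact hw) hu2.2

lemma BSw_nonneg (k : ℝ) {w : ℝ} (hw : 0 < w) : 0 ≤ BSw k w := by
  rcases lt_trichotomy k 0 with hk | hk | hk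
  · -- reduce to -k > 0 case via symmetry
    have h := BSw_symm (k := k) hw.ne'
    have hrec : 0 ≤ BSw (-k) w := by
      rcases lt_trichotomy (-k) 0 with h2 | h2 | h2
      · linarith
      · linarith
      · exact BSw_nonneg_pos h2 hw
    have he : Real.exp k ≤ 1 := by
      rw [Real.exp_le_one_iff]; linarith
    nlinarith [Real.exp_pos k]
  · subst hk
    unfold BSw D1 D2
    simp only [Real.exp_zero, one_mul, neg_zero, zero_div, zero_add, zero_sub]
    have := cdf_mono (show -(w/2) ≤ 0 + w/2 by linarith)
    simpa using this
  · exact BSw_nonneg_pos hk hw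

lemma BSw_ge {k w : ℝ} (hw : 0 < w) : 1 - Real.exp k ≤ BSw k w := by
  rw [BSw_symm hw.ne']
  nlinarith [BSw_nonneg (-k) hw, Real.exp_pos k]

section Convexity

variable {F s : ℝ} {V V1 V2 : ℝ → ℝ}

/-- Derivative of the slice function G k = BSw k (V k * s). -/
lemma hasDerivAt_G (hs : 0 < s) (hVpos : ∀ k, 0 < V k)
    (hV1 : ∀ k, HasDerivAt V (V1 k) k) (k : ℝ) :
    HasDerivAt (fun k => BSw k (V k * s))
      (stdGaussPDF (D1 k (V k * s)) * (V1 k * s)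
        - Real.exp k * stdGaussCDF (D2 k (V k * s))) k := by
  have hw : HasDerivAt (fun k => V k * s) (V1 k * s) k := (hV1 k).mul_const s
  have hwpos : 0 < V k * s := mul_pos (hVpos k) hs
  set w : ℝ → ℝ := fun k => V k * s with hwdef
  have hP : HasDerivAt (fun k => D1 k (w k))
      (((-1) * w k - (-k) * (V1 k * s)) / (w k) ^ 2 + (V1 k * s) / 2) k := by
    have h1 : HasDerivAt (fun k => -k / w k)
        (((-1) * w k - (-k) * (V1 k * s)) / (w k) ^ 2) k :=
      ((hasDerivAt_id k).neg).div hw hwpos.ne'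
    exact h1.add (hw.div_const 2)
  have hQ : HasDerivAt (fun k => D2 k (w k))
      (((-1) * w k - (-k) * (V1 k * s)) / (w k) ^ 2 - (V1 k * s) / 2) k := by
    have h1 : HasDerivAt (fun k => -k / w k)
        (((-1) * w k - (-k) * (V1 k * s)) / (w k) ^ 2) k :=
      ((hasDerivAt_id k).neg).div hw hwpos.ne'
    exact h1.sub (hw.div_const 2)
  have h1 := (cdf_hasDeriv (D1 k (w k))).comp k hP
  have h2 := (Real.hasDerivAt_exp k).mul ((cdf_hasDeriv (D2 k (w k))).comp k hQ)
  have h3 := h1.sub h2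
  have hG : ∀ x : ℝ, stdGaussCDF (D1 x (w x)) - Real.exp x * stdGaussCDF (D2 x (w x))
      = BSw x (V x * s) := fun x => rfl
  have h4 := h3.congr_of_eventuallyEq (by filter_upwards with x; exact (hG x).symm)
  refine h4.congr_deriv (Eq.symm ?_)
  have hid := pdf_identity (k := k) hwpos.ne'
  simp only [Function.comp]
  set A := ((-1) * w k - (-k) * (V1 k * s)) / (w k) ^ 2 with hA
  linear_combination (A - (V1 k * s)/2) * hid

/-- Derivative of G1, expressed as G1 + density term. -/
lemma hasDerivAt_G1 (hs : 0 < s) (hVpos : ∀ k, 0 < V k)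
    (hV1 : ∀ k, HasDerivAt V (V1 k) k) (hV2 : ∀ k, HasDerivAt V1 (V2 k) k) (k : ℝ) :
    HasDerivAt (fun k => stdGaussPDF (D1 k (V k * s)) * (V1 k * s)
        - Real.exp k * stdGaussCDF (D2 k (V k * s)))
      ((stdGaussPDF (D1 k (V k * s)) * (V1 k * s)
          - Real.exp k * stdGaussCDF (D2 k (V k * s)))
        + stdGaussPDF (D1 k (V k * s))
          * ((1 + D1 k (V k * s) * (V1 k * s)) * (1 + D2 k (V k * s) * (V1 k * s))
              + (V k * s) * (V2 k * s)) / (V k * s)) k := by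
  have hw : HasDerivAt (fun k => V k * s) (V1 k * s) k := (hV1 k).mul_const s
  have hw' : HasDerivAt (fun k => V1 k * s) (V2 k * s) k := (hV2 k).mul_const s
  have hwpos : 0 < V k * s := mul_pos (hVpos k) hs
  set w : ℝ → ℝ := fun k => V k * s with hwdef
  have hP : HasDerivAt (fun k => D1 k (w k))
      (((-1) * w k - (-k) * (V1 k * s)) / (w k) ^ 2 + (V1 k * s) / 2) k := by
    have h1 : HasDerivAt (fun k => -k / w k)
        (((-1) * w k - (-k) * (V1 k * s)) / (w k) ^ 2) k :=
      ((hasDerivAt_id k).neg).div hw hwpos.ne'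
    exact h1.add (hw.div_const 2)
  have hQ : HasDerivAt (fun k => D2 k (w k))
      (((-1) * w k - (-k) * (V1 k * s)) / (w k) ^ 2 - (V1 k * s) / 2) k := by
    have h1 : HasDerivAt (fun k => -k / w k)
        (((-1) * w k - (-k) * (V1 k * s)) / (w k) ^ 2) k :=
      ((hasDerivAt_id k).neg).div hw hwpos.ne'
    exact h1.sub (hw.div_const 2)
  have h1 : HasDerivAt (fun k => stdGaussPDF (D1 k (w k)))
      (-(D1 k (w k)) * stdGaussPDF (D1 k (w k))
        * (((-1) * w k - (-k) * (V1 k * s)) / (w k) ^ 2 + (V1 k * s) / 2)) k :=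
    (pdf_hasDeriv (D1 k (w k))).comp (h := fun k => D1 k (w k)) k hP
  have h2 := h1.mul hw'
  have h3 := (Real.hasDerivAt_exp k).mul ((cdf_hasDeriv (D2 k (w k))).comp k hQ)
  have h4 := h2.sub h3
  refine h4.congr_deriv (Eq.symm ?_)
  simp only [Function.comp, hwdef]
  have hid' : stdGaussPDF (D1 k (V k * s)) = Real.exp k * stdGaussPDF (D2 k (V k * s)) :=
    (pdf_identity hwpos.ne').symm
  show _ = _
  rw [hid']
  unfold D1 D2
  have hwne : V k * s ≠ 0 := hwpos.ne'
  have hVne : V k ≠ 0 := (hVpos k).ne'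
  have hsne : s ≠ 0 := hs.ne'
  field_simp
  ring

lemma convex_slice (hF : 0 < F) (hs : 0 < s) (hVpos : ∀ k, 0 < V k)
    (hV1 : ∀ k, HasDerivAt V (V1 k) k) (hV2 : ∀ k, HasDerivAt V1 (V2 k) k)
    (hBut : ∀ k, 0 ≤ (1 + D1 k (V k * s) * (V1 k * s)) * (1 + D2 k (V k * s) * (V1 k * s))
      + (V k * s) * (V2 k * s)) :
    ConvexOn ℝ (Set.Ioi 0) (fun K => F * BSw (Real.log (K / F)) (V (Real.log (K / F)) * s)) := by
  set g1 : ℝ → ℝ := fun k => stdGaussPDF (D1 k (V k * s)) * (V1 k * s)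
      - Real.exp k * stdGaussCDF (D2 k (V k * s)) with hg1def
  set ρ : ℝ → ℝ := fun k => stdGaussPDF (D1 k (V k * s))
      * ((1 + D1 k (V k * s) * (V1 k * s)) * (1 + D2 k (V k * s) * (V1 k * s))
          + (V k * s) * (V2 k * s)) / (V k * s) with hρdef
  have hρ : ∀ k, 0 ≤ ρ k := fun k =>
    div_nonneg (mul_nonneg (pdf_pos _).le (hBut k)) (mul_pos (hVpos k) hs).le
  set ℓ : ℝ → ℝ := fun K => Real.log (K / F) with hℓdef
  have hℓ : ∀ K : ℝ, 0 < K → HasDerivAt ℓ K⁻¹ K := by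
    intro K hK
    have h1 : HasDerivAt (fun K : ℝ => Real.log K - Real.log F) K⁻¹ K :=
      (Real.hasDerivAt_log hK.ne').sub_const _
    refine h1.congr_of_eventuallyEq ?_
    filter_upwards [isOpen_Ioi.mem_nhds hK] with x hx
    rw [hℓdef]
    simp only
    rw [Real.log_div (ne_of_gt hx) hF.ne']
  set W : ℝ → ℝ := fun K => F * BSw (Real.log (K / F)) (V (Real.log (K / F)) * s) with hWdef
  set W1 : ℝ → ℝ := fun K => F * (g1 (ℓ K) * K⁻¹) with hW1def
  have hW : ∀ K : ℝ, 0 < K → HasDerivAt W (W1 K) K := by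
    intro K hK
    have := ((hasDerivAt_G hs hVpos hV1 (ℓ K)).comp K (hℓ K hK)).const_mul F
    exact this
  have hW1 : ∀ K : ℝ, 0 < K → HasDerivAt W1 (F * (ρ (ℓ K) / K ^ 2)) K := by
    intro K hK
    have h1 : HasDerivAt (fun K => g1 (ℓ K)) ((g1 (ℓ K) + ρ (ℓ K)) * K⁻¹) K :=
      (hasDerivAt_G1 hs hVpos hV1 hV2 (ℓ K)).comp K (hℓ K hK)
    have h2 : HasDerivAt (fun K : ℝ => K⁻¹) (-(K ^ 2)⁻¹) K := hasDerivAt_inv hK.ne'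
    have h3 := (h1.mul h2).const_mul F
    refine h3.congr_deriv (Eq.symm ?_)
    field_simp
    ring
  have hev : ∀ K : ℝ, 0 < K → deriv W =ᶠ[nhds K] W1 := by
    intro K hK
    filter_upwards [isOpen_Ioi.mem_nhds hK] with x hx
    exact (hW x hx).deriv
  apply convexOn_of_deriv2_nonneg (convex_Ioi 0)
  · exact fun K hK => (hW K hK).continuousAt.continuousWithinAt
  · rw [interior_Ioi]
    exact fun K hK => (hW K hK).differentiableAt.differentiableWithinAt
  · rw [interior_Ioi]
    intro K hK
    have : DifferentiableAt ℝ W1 K := (hW1 K hK).differentiableAt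
    exact ((hev K hK).differentiableAt_iff.mpr this).differentiableWithinAt
  · rw [interior_Ioi]
    intro K hK
    have h1 : deriv (deriv W) K = deriv W1 K := (hev K hK).deriv_eq
    have h2 : deriv W1 K = F * (ρ (ℓ K) / K ^ 2) := (hW1 K hK).deriv
    have h3 : deriv^[2] W K = deriv (deriv W) K := by
      simp [Function.iterate_succ_apply']
    rw [h3, h1, h2]
    have : (0:ℝ) ≤ ρ (ℓ K) / K ^ 2 := div_nonneg (hρ _) (by positivity)
    positivity

end Convexity

lemma BSw_lt_one (k : ℝ) (w : ℝ) : BSw k w < 1 := by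
  unfold BSw
  nlinarith [cdf_lt_one (D1 k w), cdf_nonneg (D2 k w), Real.exp_pos k]

lemma sqrt_tendsto_atTop : Tendsto Real.sqrt atTop atTop := by
  apply tendsto_atTop_atTop_of_monotone (fun a b h => Real.sqrt_le_sqrt h)
  intro b
  exact ⟨(max b 0) ^ 2, by
    rw [Real.sqrt_sq (le_max_right b 0)]
    exact le_max_left b 0⟩

/-- Chord inequality for convex functions on `(0, ∞)`. -/
lemma convex_chord {f : ℝ → ℝ} (hconv : ConvexOn ℝ (Set.Ioi 0) f) {x y z : ℝ}
    (hx : 0 < x) (hxy : x < y) (hyz : y < z) :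
    f y ≤ ((z - y) * f x + (y - x) * f z) / (z - x) := by
  have hz : 0 < z := hx.trans (hxy.trans hyz)
  have hzx : 0 < z - x := by linarith
  have ha : 0 ≤ (z - y) / (z - x) := div_nonneg (by linarith) hzx.le
  have hb : 0 ≤ (y - x) / (z - x) := div_nonneg (by linarith) hzx.le
  have hab : (z - y) / (z - x) + (y - x) / (z - x) = 1 := by
    field_simp
    ring
  have hcomb : ((z - y) / (z - x)) • x + ((y - x) / (z - x)) • z = y := by
    simp only [smul_eq_mul]
    field_simp
    ring
  have := hconv.2 (Set.mem_Ioi.mpr hx) (Set.mem_Ioi.mpr hz) ha hb hab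
  rw [hcomb] at this
  simp only [smul_eq_mul] at this
  calc f y ≤ (z - y) / (z - x) * f x + (y - x) / (z - x) * f z := this
    _ = ((z - y) * f x + (y - x) * f z) / (z - x) := by field_simp

/-- A convex function on `(0,∞)` bounded above is antitone. -/
lemma antitoneOn_of_convexOn_bddAbove {f : ℝ → ℝ} {M : ℝ}
    (hconv : ConvexOn ℝ (Set.Ioi 0) f) (hbdd : ∀ x, 0 < x → f x ≤ M) :
    AntitoneOn f (Set.Ioi 0) := by
  intro x hx y hy hxy
  rcases eq_or_lt_of_le hxy with rfl | hxy
  · exact le_refl _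
  by_contra hcon
  push_neg at hcon
  have hx0 : (0:ℝ) < x := hx
  set m : ℝ := (f y - f x) / (y - x) with hm
  have hyx : 0 < y - x := by linarith
  have hmpos : 0 < m := div_pos (by linarith) hyx
  set z : ℝ := y + (M - f y) / m + 1 with hz
  have hMy : f y ≤ M := hbdd y hy
  have hyz : y < z := by
    have h0 : 0 ≤ (M - f y) / m := div_nonneg (by linarith) hmpos.le
    simp only [hz]; linarith
  have hchord := convex_chord hconv hx0 hxy hyz
  have hzx : 0 < z - x := by linarith
  have h1 : f y * (z - x) ≤ (z - y) * f x + (y - x) * f z := by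
    rw [le_div_iff₀ hzx] at hchord
    linarith
  have hm' : m * (y - x) = f y - f x := by
    rw [hm]; field_simp
  have hz' : (z - y) * m = (M - f y) + m := by
    rw [hz]; field_simp; ring
  have hcontr : f z ≤ M := hbdd z (by linarith)
  nlinarith [h1, hm', hz', hcontr, hmpos, hyx, mul_pos hmpos hyx]

lemma BSw_le_cdf (k w : ℝ) : BSw k w ≤ stdGaussCDF (D1 k w) := by
  unfold BSw
  nlinarith [cdf_nonneg (D2 k w), Real.exp_pos k]

lemma BSw_lower {A k w : ℝ} (hA : 4 ≤ A) (hk : 1 ≤ k) (hw : 0 < w) (h : A * k ≤ w ^ 2) :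
    stdGaussCDF (Real.sqrt A / 4) - 2 / (Real.sqrt (2 * Real.pi) * Real.sqrt A) ≤ BSw k w := by
  have hA0 : (0:ℝ) < A := by linarith
  have hsA : 2 ≤ Real.sqrt A := by
    rw [show (2:ℝ) = Real.sqrt 4 by rw [show (4:ℝ) = 2^2 by norm_num, Real.sqrt_sq (by norm_num)]]
    exact Real.sqrt_le_sqrt hA
  have hsA0 : 0 < Real.sqrt A := by linarith
  have hwA : Real.sqrt A ≤ w := by
    have h1 : A ≤ w ^ 2 := by nlinarith
    calc Real.sqrt A ≤ Real.sqrt (w ^ 2) := Real.sqrt_le_sqrt h1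
      _ = w := Real.sqrt_sq hw.le
  have h4k : 4 * k ≤ w ^ 2 := by nlinarith [mul_nonneg (show (0:ℝ) ≤ A - 4 by linarith) (show (0:ℝ) ≤ k by linarith)]
  have hD1 : Real.sqrt A / 4 ≤ D1 k w := by
    rw [← sub_nonneg]
    have key : D1 k w - Real.sqrt A / 4 = (2 * w ^ 2 - 4 * k - Real.sqrt A * w) / (4 * w) := by
      unfold D1; field_simp; ring
    rw [key]
    apply div_nonneg _ (by positivity)
    nlinarith [mul_le_mul_of_nonneg_right hwA hw.le]
  have hcdf1 : stdGaussCDF (Real.sqrt A / 4) ≤ stdGaussCDF (D1 k w) := cdf_mono hD1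
  have hD2neg : D2 k w < 0 := by
    unfold D2
    have : 0 < k / w := by positivity
    have h2 : -k / w = -(k / w) := by ring
    rw [h2]; linarith [hw]
  have hmills := mills hD2neg
  have hid := pdf_identity (k := k) hw.ne'
  have hD2le : w / 2 ≤ -(D2 k w) := by
    unfold D2
    have : 0 ≤ k / w := by positivity
    have h2 : -(-k / w - w / 2) = k / w + w / 2 := by ring
    rw [h2]; linarith
  have htail : Real.exp k * stdGaussCDF (D2 k w) ≤ 2 / (Real.sqrt (2 * Real.pi) * Real.sqrt A) := by
    have h1 : Real.exp k * stdGaussCDF (D2 k w) ≤ Real.exp k * (stdGaussPDF (D2 k w) / (-(D2 k w))) :=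
      mul_le_mul_of_nonneg_left hmills (Real.exp_pos k).le
    have h2 : Real.exp k * (stdGaussPDF (D2 k w) / (-(D2 k w))) = stdGaussPDF (D1 k w) / (-(D2 k w)) := by
      rw [← hid]; ring
    have hD2pos : 0 < -(D2 k w) := by linarith
    have h3 : stdGaussPDF (D1 k w) / (-(D2 k w)) ≤ (Real.sqrt (2 * Real.pi))⁻¹ / (Real.sqrt A / 2) := by
      apply div_le_div₀ (by positivity) (pdf_le _) (by positivity)
      linarith [hD2le, hwA]
    have h4 : (Real.sqrt (2 * Real.pi))⁻¹ / (Real.sqrt A / 2) = 2 / (Real.sqrt (2 * Real.pi) * Real.sqrt A) := by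
      have h2pi : 0 < Real.sqrt (2 * Real.pi) := Real.sqrt_pos.mpr (by positivity)
      field_simp
    linarith
  unfold BSw
  linarith

lemma tail_tendsto {τ : ℝ} (hτ : 0 < τ) (V : ℝ → ℝ) (hVpos : ∀ k, 0 < V k)
    (hbdd : ∃ b, ∀ᶠ k in atTop, (V k)^2 / k ≤ b)
    (hlimsup : Filter.limsup (fun k => (V k)^2 / k) Filter.atTop < 2 / τ) :
    Tendsto (fun k => BSw k (V k * Real.sqrt τ)) atTop (nhds 0) := by
  obtain ⟨a, ha1, ha2⟩ := exists_between hlimsup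
  obtain ⟨b0, hb0⟩ := hbdd
  have hev : ∀ᶠ k in atTop, (V k)^2 / k < a :=
    eventually_lt_of_limsup_lt ha1 ⟨b0, eventually_map.mpr hb0⟩
  have hapos : 0 < a := by
    obtain ⟨k, hk1, hk2⟩ := (hev.and (eventually_gt_atTop 0)).exists
    have : 0 < (V k)^2 / k := div_pos (pow_pos (hVpos k) 2) hk2
    linarith
  set b : ℝ := a * τ with hbdef
  have hb2 : b < 2 := by
    rw [hbdef]
    calc a * τ < (2 / τ) * τ := by
          apply mul_lt_mul_of_pos_right ha2 hτ
      _ = 2 := by field_simp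
  have hbpos : 0 < b := mul_pos hapos hτ
  set sb : ℝ := Real.sqrt b with hsbdef
  have hsb : 0 < sb := Real.sqrt_pos.mpr hbpos
  have hsb2 : sb ^ 2 = b := Real.sq_sqrt hbpos.le
  set c : ℝ := (b - 2) / (2 * sb) with hcdef
  have hcneg : c < 0 := div_neg_of_neg_of_pos (by linarith) (by positivity)
  have hD1ev : ∀ᶠ k in atTop, D1 k (V k * Real.sqrt τ) ≤ c * Real.sqrt k := by
    filter_upwards [hev, eventually_ge_atTop 1] with k hk h1k
    have hk0 : (0:ℝ) < k := by linarith
    set w : ℝ := V k * Real.sqrt τ with hwdef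
    have hw : 0 < w := mul_pos (hVpos k) (Real.sqrt_pos.mpr hτ)
    have hw2 : w ^ 2 ≤ b * k := by
      have h1 : (V k)^2 < a * k := by
        rw [div_lt_iff₀ hk0] at hk; linarith
      have h2 : w ^ 2 = (V k)^2 * τ := by
        rw [hwdef, mul_pow, Real.sq_sqrt hτ.le]
      rw [h2, hbdef]; nlinarith
    set s : ℝ := Real.sqrt k with hsdef
    have hs : 0 < s := Real.sqrt_pos.mpr hk0
    have hs2 : s ^ 2 = k := Real.sq_sqrt hk0.le
    have hwsb : w ≤ sb * s := by
      have h1 : w ^ 2 ≤ (sb * s) ^ 2 := by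
        nlinarith [hw2, hsb2, hs2]
      calc w = Real.sqrt (w ^ 2) := (Real.sqrt_sq hw.le).symm
        _ ≤ Real.sqrt ((sb * s) ^ 2) := Real.sqrt_le_sqrt h1
        _ = sb * s := Real.sqrt_sq (by positivity)
    have key : c * s - D1 k w = (sb * s - w) * (sb * w + 2 * s) / (2 * sb * w) := by
      unfold D1
      rw [hcdef]
      have ek : k = s ^ 2 := hs2.symm
      have eb : b = sb ^ 2 := hsb2.symm
      rw [ek, eb]
      field_simp
      ring
    have hnum : 0 ≤ (sb * s - w) * (sb * w + 2 * s) := by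
      apply mul_nonneg (by linarith) (by positivity)
    have : 0 ≤ c * s - D1 k w := by
      rw [key]; positivity
    linarith
  have hcs : Tendsto (fun k : ℝ => c * Real.sqrt k) atTop atBot :=
    sqrt_tendsto_atTop.const_mul_atTop_of_neg hcneg
  have hD1 : Tendsto (fun k => D1 k (V k * Real.sqrt τ)) atTop atBot :=
    tendsto_atBot_mono' atTop hD1ev hcs
  apply tendsto_of_tendsto_of_tendsto_of_le_of_le' tendsto_const_nhds (cdf_tendsto_zero.comp hD1)
  · filter_upwards with k
    exact BSw_nonneg k (mul_pos (hVpos k) (Real.sqrt_pos.mpr hτ))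
  · filter_upwards with k
    exact BSw_le_cdf k _

theorem stmt17 (F : ℝ) (hF : 0 < F) (vhat : ℝ → ℝ → ℝ)
    (hpos : ∀ τ, 0 < τ → ∀ k, 0 < vhat τ k)
    (hcont : ContinuousOn (fun p : ℝ × ℝ => vhat p.1 p.2)
      (Set.Ioi (0 : ℝ) ×ˢ (Set.univ : Set ℝ)))
    (hcal : ∀ k : ℝ, MonotoneOn (fun τ => vhat τ k * Real.sqrt τ) (Set.Ioi (0 : ℝ)))
    (hsmooth : ∀ τ, 0 < τ → ContDiff ℝ 2 (vhat τ))
    (hBut : ∀ τ, 0 < τ → ∀ k : ℝ,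
      0 ≤ But τ k (vhat τ k) (deriv (vhat τ) k) (deriv (deriv (vhat τ)) k))
    (hlimsup : ∀ τ, 0 < τ →
      Filter.limsup (fun k => (vhat τ k) ^ 2 / k) Filter.atTop < 2 / τ)
    (C : ℝ → ℝ → ℝ)
    (hC : ∀ τ K : ℝ, C τ K =
      F * BS τ (Real.log (K / F)) (vhat τ (Real.log (K / F)))) :
    (∀ K, 0 < K → MonotoneOn (fun τ => C τ K) (Set.Ioi (0 : ℝ))) ∧
    (∀ τ, 0 < τ → ConvexOn ℝ (Set.Ioi (0 : ℝ)) (C τ) ∧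
      AntitoneOn (C τ) (Set.Ioi (0 : ℝ))) ∧
    (∀ τ, 0 < τ → ∀ K, 0 < K → max (F - K) 0 ≤ C τ K ∧ C τ K ≤ F) ∧
    (∀ τ, 0 < τ → Filter.Tendsto (fun K => C τ K) Filter.atTop (nhds 0)) := by
  have hBSeq : ∀ τ k v : ℝ, BS τ k v = BSw k (v * Real.sqrt τ) := fun _ _ _ => rfl
  -- (c) the bounds
  have hBound : ∀ τ, 0 < τ → ∀ K, 0 < K → max (F - K) 0 ≤ C τ K ∧ C τ K ≤ F := by
    intro τ hτ K hK
    rw [hC, hBSeq]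
    set k : ℝ := Real.log (K / F) with hkdef
    have hw : 0 < vhat τ k * Real.sqrt τ := mul_pos (hpos τ hτ k) (Real.sqrt_pos.mpr hτ)
    constructor
    · apply max_le
      · have h1 := BSw_ge (k := k) hw
        have h2 : Real.exp k = K / F := Real.exp_log (div_pos hK hF)
        have h3 := mul_le_mul_of_nonneg_left h1 hF.le
        rw [h2] at h3
        have h4 : F * (1 - K / F) = F - K := by field_simp
        linarith
      · exact mul_nonneg hF.le (BSw_nonneg k hw)
    · have h1 := BSw_le_one k (vhat τ k * Real.sqrt τ)
      nlinarith
  -- (b) convexity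
  have hConv : ∀ τ, 0 < τ → ConvexOn ℝ (Set.Ioi (0:ℝ)) (C τ) := by
    intro τ hτ
    have hs : 0 < Real.sqrt τ := Real.sqrt_pos.mpr hτ
    have hd := hsmooth τ hτ
    have hV1 : ∀ k, HasDerivAt (vhat τ) (deriv (vhat τ) k) k := fun k =>
      ((hd.differentiable (by norm_num)) k).hasDerivAt
    have hd2 : ContDiff ℝ (1 + 1 : ℕ) (vhat τ) := by exact_mod_cast hd
    have hderivCD : ContDiff ℝ (1:ℕ) (deriv (vhat τ)) := by
      have := (contDiff_succ_iff_deriv (n := 1)).mp (by exact_mod_cast hd2)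
      exact_mod_cast this.2.2
    have hV2 : ∀ k, HasDerivAt (deriv (vhat τ)) (deriv (deriv (vhat τ)) k) k := fun k =>
      ((hderivCD.differentiable (by norm_num)) k).hasDerivAt
    have hss : Real.sqrt τ * Real.sqrt τ = τ := Real.mul_self_sqrt hτ.le
    have hBut' : ∀ k, 0 ≤ (1 + D1 k (vhat τ k * Real.sqrt τ) * (deriv (vhat τ) k * Real.sqrt τ))
        * (1 + D2 k (vhat τ k * Real.sqrt τ) * (deriv (vhat τ) k * Real.sqrt τ))
        + (vhat τ k * Real.sqrt τ) * (deriv (deriv (vhat τ)) k * Real.sqrt τ) := by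
      intro k
      have h := hBut τ hτ k
      have heq : (1 + D1 k (vhat τ k * Real.sqrt τ) * (deriv (vhat τ) k * Real.sqrt τ))
          * (1 + D2 k (vhat τ k * Real.sqrt τ) * (deriv (vhat τ) k * Real.sqrt τ))
          + (vhat τ k * Real.sqrt τ) * (deriv (deriv (vhat τ)) k * Real.sqrt τ)
          = But τ k (vhat τ k) (deriv (vhat τ) k) (deriv (deriv (vhat τ)) k) := by
        unfold But d1 d2 D1 D2
        linear_combination (vhat τ k * deriv (deriv (vhat τ)) k) * hss
      rw [heq]
      exact h
    have hcs := convex_slice (V := vhat τ) (V1 := deriv (vhat τ)) (V2 := deriv (deriv (vhat τ)))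
      hF hs (hpos τ hτ) hV1 hV2 hBut'
    have hfe : C τ = fun K => F * BSw (Real.log (K / F))
        (vhat τ (Real.log (K / F)) * Real.sqrt τ) := by
      funext K; rw [hC, hBSeq]
    rw [hfe]
    exact hcs
  -- antitone
  have hAnti : ∀ τ, 0 < τ → AntitoneOn (C τ) (Set.Ioi (0:ℝ)) := fun τ hτ =>
    antitoneOn_of_convexOn_bddAbove (hConv τ hτ) (fun K hK => (hBound τ hτ K hK).2)
  -- (a) calendar
  have hMono : ∀ K, 0 < K → MonotoneOn (fun τ => C τ K) (Set.Ioi (0:ℝ)) := by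
    intro K hK τ1 h1 τ2 h2 h12
    simp only [hC, hBSeq]
    set k : ℝ := Real.log (K / F)
    have hw1 : (0:ℝ) < vhat τ1 k * Real.sqrt τ1 :=
      mul_pos (hpos τ1 h1 k) (Real.sqrt_pos.mpr h1)
    have hw2 : (0:ℝ) < vhat τ2 k * Real.sqrt τ2 :=
      mul_pos (hpos τ2 h2 k) (Real.sqrt_pos.mpr h2)
    apply mul_le_mul_of_nonneg_left _ hF.le
    exact (BSw_strictMono k).monotoneOn hw1 hw2 (hcal k h1 h2 h12)
  -- (d) tail
  have hTail : ∀ τ, 0 < τ → Filter.Tendsto (fun K => C τ K) Filter.atTop (nhds 0) := by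
    intro τ hτ
    by_cases hbdd : ∃ b, ∀ᶠ k in atTop, (vhat τ k)^2 / k ≤ b
    · have hG := tail_tendsto hτ (vhat τ) (hpos τ hτ) hbdd (hlimsup τ hτ)
      have hdiv : Tendsto (fun K : ℝ => K / F) atTop atTop :=
        tendsto_id.atTop_div_const hF
      have hlog : Tendsto (fun K : ℝ => Real.log (K / F)) atTop atTop :=
        Real.tendsto_log_atTop.comp hdiv
      have h2 := (hG.comp hlog).const_mul F
      rw [mul_zero] at h2
      refine h2.congr fun K => ?_
      rw [hC, hBSeq]
      rfl
    · exfalso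
      push_neg at hbdd
      have hfreq : ∀ b : ℝ, ∃ᶠ k in atTop, b < (vhat τ k)^2 / k := by
        intro b
        have := hbdd b
        exact this
      set s : ℝ := Real.sqrt τ with hsdef
      have hs : 0 < s := Real.sqrt_pos.mpr hτ
      set G : ℝ → ℝ := fun k => BSw k (vhat τ k * s) with hGdef
      have hlogk : ∀ k : ℝ, Real.log (F * Real.exp k / F) = k := by
        intro k
        rw [mul_comm, mul_div_assoc, div_self hF.ne', mul_one, Real.log_exp]
      have hGC : ∀ k : ℝ, C τ (F * Real.exp k) = F * G k := by
        intro k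
        rw [hC, hBSeq, hlogk]
      have hGanti : ∀ k1 k2 : ℝ, k1 ≤ k2 → G k2 ≤ G k1 := by
        intro k1 k2 h12
        have hm1 : F * Real.exp k1 ∈ Set.Ioi (0:ℝ) := by
          simp only [Set.mem_Ioi]; positivity
        have hm2 : F * Real.exp k2 ∈ Set.Ioi (0:ℝ) := by
          simp only [Set.mem_Ioi]; positivity
        have := hAnti τ hτ hm1 hm2
          (mul_le_mul_of_nonneg_left (Real.exp_le_exp.mpr h12) hF.le)
        rw [hGC, hGC] at this
        exact le_of_mul_le_mul_left this hF
      have hG0 : G 0 < 1 := BSw_lt_one 0 _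
      have hAten : Tendsto (fun A : ℝ => stdGaussCDF (Real.sqrt A / 4)
          - 2 / (Real.sqrt (2 * Real.pi) * Real.sqrt A)) atTop (nhds (1 - 0)) := by
        apply Tendsto.sub
        · exact cdf_tendsto_one.comp
            (Tendsto.atTop_div_const (by norm_num) sqrt_tendsto_atTop)
        · apply Tendsto.div_atTop tendsto_const_nhds
          exact Tendsto.const_mul_atTop (Real.sqrt_pos.mpr (by positivity)) sqrt_tendsto_atTop
      have hevA : ∀ᶠ A in atTop, G 0 < stdGaussCDF (Real.sqrt A / 4)
          - 2 / (Real.sqrt (2 * Real.pi) * Real.sqrt A) :=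
        hAten.eventually (eventually_gt_nhds (by simpa using hG0))
      obtain ⟨A, hGA, hA4⟩ := (hevA.and (eventually_ge_atTop 4)).exists
      obtain ⟨k₁, hk₁, h1k⟩ := ((hfreq (A / τ)).and_eventually (eventually_ge_atTop 1)).exists
      have hk₁0 : (0:ℝ) < k₁ := by linarith
      have hwk : 0 < vhat τ k₁ * s := mul_pos (hpos τ hτ k₁) hs
      have hsq : A * k₁ ≤ (vhat τ k₁ * s) ^ 2 := by
        have h1 : A * k₁ < (vhat τ k₁)^2 * τ := by
          rw [div_lt_div_iff₀ hτ hk₁0] at hk₁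
          linarith
        have h2 : (vhat τ k₁ * s)^2 = (vhat τ k₁)^2 * τ := by
          rw [mul_pow, hsdef, Real.sq_sqrt hτ.le]
        linarith [h2.ge]
      have hlow := BSw_lower hA4 h1k hwk hsq
      have : G k₁ ≤ G 0 := hGanti 0 k₁ (by linarith)
      have hGk₁ : G 0 < G k₁ := by
        calc G 0 < stdGaussCDF (Real.sqrt A / 4)
            - 2 / (Real.sqrt (2 * Real.pi) * Real.sqrt A) := hGA
          _ ≤ BSw k₁ (vhat τ k₁ * s) := hlow
          _ = G k₁ := rfl
      linarith
  exact ⟨hMono, fun τ hτ => ⟨hConv τ hτ, hAnti τ hτ⟩, hBound, hTail⟩
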